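/- Let β > 0, η ∈ (0,1) with β + η ≥ 1, k and Φ as above, and let [a,b] ⊂ (0,1). Then k(t,s) ≥ c₁Φ(s) for all t ∈ [a,b] and s ∈ [0,1], where c₁ = min{a, 1 − b/(β+η)}. -/

import Mathlib

open Set

/-- Lower bound for the thermostat Green's function when `β + η ≥ 1`:
for `[a,b] ⊂ (0,1)`, `k(t,s) ≥ c₁Φ(s)` for `t ∈ [a,b]`, `s ∈ [0,1]`,
where `c₁ = min{a, 1 - b/(β+η)}`. -/
theorem thermostat_kernel_lower_bound
    (β η : ℝ) (hβ : 0 < β) (hη : η ∈ Ioo (0:ℝ) 1) (hβη : 1 ≤ β + η)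
    (H : ℝ → ℝ) (hH : ∀ τ : ℝ, H τ = if 0 ≤ τ then 1 else 0)
    (k : ℝ → ℝ → ℝ)
    (hk : ∀ t ∈ Icc (0:ℝ) 1, ∀ s ∈ Icc (0:ℝ) 1,
      k t s = β * t / (β + η) + (t / (β + η)) * (η - s) * H (η - s)
        - (t - s) * H (t - s))
    (Φ : ℝ → ℝ)
    (hΦ : ∀ s : ℝ, Φ s = if η ≤ s then (β / (β + η)) * s
      else s * (1 - s / (β + η)))
    (a b : ℝ) (ha : 0 < a) (hab : a ≤ b) (hb : b < 1) :
    ∀ t ∈ Icc a b, ∀ s ∈ Icc (0:ℝ) 1,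
      min a (1 - b / (β + η)) * Φ s ≤ k t s := by
  obtain ⟨hη0, hη1⟩ := hη
  have hB : (0:ℝ) < β + η := by linarith
  have hb0 : 0 ≤ b := le_trans ha.le hab
  intro t ht s hs
  obtain ⟨hta, htb⟩ := ht
  obtain ⟨hs0, hs1⟩ := hs
  have ht0 : 0 ≤ t := le_trans ha.le hta
  have ht1 : t ≤ 1 := le_trans htb hb.le
  rw [hk t ⟨ht0, ht1⟩ s ⟨hs0, hs1⟩, hΦ, hH, hH]
  set c := min a (1 - b / (β + η)) with hc
  have hc1 : c ≤ a := min_le_left _ _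
  have hc2 : c ≤ 1 - b / (β + η) := min_le_right _ _
  have hbB : b / (β + η) < 1 := by rw [div_lt_one hB]; linarith
  have hc0 : 0 ≤ c := le_min ha.le (by linarith)
  have hc2' : c * (β + η) ≤ (β + η) - b := by
    have h := (mul_le_mul_iff_of_pos_right hB).mpr hc2
    have hbb : (1 - b / (β + η)) * (β + η) = (β + η) - b := by field_simp
    linarith [hbb ▸ h]
  clear_value c
  clear hc hc2 hbB
  have hcs : c * s ≤ t := by nlinarith
  have h4 : 0 ≤ (β + η) - b := by linarith
  rw [← mul_le_mul_iff_of_pos_right hB]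
  by_cases h1 : η ≤ s
  · rw [if_pos h1]
    have hzero' : t / (β + η) * (η - s) * (if 0 ≤ η - s then (1:ℝ) else 0) = 0 := by
      split_ifs with h2
      · have he : η - s = 0 := le_antisymm (by linarith) h2
        rw [he]; ring
      · ring
    rw [hzero']
    by_cases h3 : 0 ≤ t - s
    · rw [if_pos h3]
      have key : c * (β + η) * (β * s) ≤ ((β + η) - b) * (β * s) :=
        mul_le_mul_of_nonneg_right hc2' (mul_nonneg hβ.le hs0)
      field_simp
      nlinarith [mul_nonneg (mul_nonneg hη0.le hB.le) (sub_nonneg.2 h1),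
        mul_nonneg (mul_nonneg hη0.le hη0.le) h4,
        mul_nonneg (mul_nonneg hη0.le hB.le) (sub_nonneg.2 htb),
        mul_nonneg (mul_nonneg hb0 hβ.le) (sub_nonneg.2 h1), hB, key]
    · rw [if_neg h3]
      field_simp
      nlinarith [mul_le_mul_of_nonneg_left hcs hβ.le]
  · rw [if_neg h1]
    push_neg at h1
    rw [if_pos (show (0:ℝ) ≤ η - s by linarith)]
    by_cases h3 : 0 ≤ t - s
    · rw [if_pos h3]
      have key3 : c * ((β + η) - s) ≤ (β + η) - t := by
        nlinarith [mul_nonneg hc0 hs0]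
      field_simp
      nlinarith [mul_le_mul_of_nonneg_left key3 hs0, hB]
    · rw [if_neg h3]
      field_simp
      nlinarith [mul_le_mul_of_nonneg_right hcs (show (0:ℝ) ≤ (β + η) - s by linarith)]
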